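/- For every integer k ≥ 3, if H is the cycle C_k on k vertices, then μ_int(K_1 ⊙ H) ≤ 2, where K_1 ⊙ H is the graph obtained from H by adding a single new universal vertex adjacent to every vertex of H (i.e., K_1 ⊙ C_k is the wheel graph on k+1 vertices). -/

import Mathlib

/-- An (improper) interval edge coloring: for every vertex, the set of colors on
incident edges forms an interval of consecutive integers. -/
def IsIntervalColoring {V : Type*} (G : SimpleGraph V) (c : Sym2 V → ℤ) : Prop :=
  ∀ v : V, ∀ a b x : ℤ,
    (∃ u, G.Adj v u ∧ c s(v, u) = a) → (∃ u, G.Adj v u ∧ c s(v, u) = b) →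
    a ≤ x → x ≤ b → ∃ u, G.Adj v u ∧ c s(v, u) = x

/-- A coloring is `k`-improper if at every vertex each color appears on at most
`k` incident edges. -/
def IsKImproper {V : Type*} (G : SimpleGraph V) (c : Sym2 V → ℤ) (k : ℕ) : Prop :=
  ∀ v : V, ∀ q : ℤ, ({u : V | G.Adj v u ∧ c s(v, u) = q}).ncard ≤ k

/-- The interval coloring impropriety `μ_int(G)`: the least `k` such that `G`
admits a `k`-improper interval edge coloring. -/
noncomputable def impropriety {V : Type*} (G : SimpleGraph V) : ℕ :=
  sInf {k : ℕ | ∃ c : Sym2 V → ℤ, IsIntervalColoring G c ∧ IsKImproper G c k}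

/-- The maximum degree of a graph. -/
noncomputable def maxDeg {V : Type*} (G : SimpleGraph V) : ℕ :=
  sSup {d : ℕ | ∃ v : V, (G.neighborSet v).ncard = d}

/-- The corona product `G ⊙ H`: take `G` and one copy of `H` for every vertex
of `G`, joining each vertex `v` of `G` to all vertices of its copy of `H`. -/
def corona {V W : Type*} (G : SimpleGraph V) (H : SimpleGraph W) :
    SimpleGraph (V ⊕ V × W) where
  Adj x y :=
    match x, y with
    | Sum.inl u, Sum.inl v => G.Adj u v
    | Sum.inl u, Sum.inr p => u = p.1
    | Sum.inr p, Sum.inl u => u = p.1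
    | Sum.inr p, Sum.inr q => p.1 = q.1 ∧ H.Adj p.2 q.2
  symm := by
    constructor
    rintro (u | p) (v | q) h
    · exact h.symm
    · exact h
    · exact h
    · exact ⟨h.1.symm, h.2.symm⟩
  loopless := by
    constructor
    rintro (u | p) h
    · exact G.ne_of_adj h rfl
    · exact H.ne_of_adj h.2 rfl

namespace Stmt9Aux

open SimpleGraph

/-- spoke color -/
def fcol (k a : ℕ) : ℤ := min ((a : ℤ) + 1) ((k : ℤ) - a)
/-- cycle edge {a, a+1 mod k} color -/
def gcol (k a : ℕ) : ℤ := min ((a : ℤ) + 1) ((k : ℤ) - 1 - a)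

def ec (k : ℕ) : (Fin 1 ⊕ Fin 1 × Fin k) → (Fin 1 ⊕ Fin 1 × Fin k) → ℤ
  | Sum.inl _, Sum.inl _ => 0
  | Sum.inl _, Sum.inr p => fcol k p.2.val
  | Sum.inr p, Sum.inl _ => fcol k p.2.val
  | Sum.inr p, Sum.inr q =>
      if p.2.val + 1 = q.2.val then gcol k p.2.val
      else if q.2.val + 1 = p.2.val then gcol k q.2.val
      else 0

lemma ec_symm (k : ℕ) : ∀ x y, ec k x y = ec k y x := by
  rintro (u | p) (v | q) <;> simp only [ec]
  split_ifs with h1 h2 <;> first | rfl | omega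

def col (k : ℕ) : Sym2 (Fin 1 ⊕ Fin 1 × Fin k) → ℤ :=
  Sym2.lift ⟨ec k, ec_symm k⟩

@[simp] lemma col_mk (k : ℕ) (x y : Fin 1 ⊕ Fin 1 × Fin k) :
    col k s(x, y) = ec k x y := rfl

lemma mod_helper (s k : ℕ) (h : s < 2 * k) : s % k = if s < k then s else s - k := by
  split_ifs with h'
  · exact Nat.mod_eq_of_lt h'
  · rw [Nat.mod_eq_sub_mod (le_of_not_gt h'), Nat.mod_eq_of_lt (by omega)]

variable {m : ℕ}

lemma val_add_one (i : Fin (m + 3)) :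
    (i + 1).val = if i.val + 1 < m + 3 then i.val + 1 else 0 := by
  rw [Fin.add_def]
  show (i.val + 1) % (m + 3) = _
  rw [mod_helper _ _ (by omega)]
  have := i.isLt
  split_ifs <;> omega

lemma val_sub_one (i : Fin (m + 3)) :
    (i - 1).val = if i.val = 0 then m + 2 else i.val - 1 := by
  rw [Fin.sub_def]
  show (m + 3 - 1 + i.val) % (m + 3) = _
  rw [mod_helper _ _ (by omega)]
  have := i.isLt
  split_ifs <;> omega

/-- color of a cycle edge, successor form -/
lemma ec_succ (p q : Fin 1 × Fin (m + 3)) (h : q.2 = p.2 + 1) :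
    ec (m + 3) (Sum.inr p) (Sum.inr q) = gcol (m + 3) p.2.val := by
  have hv : q.2.val = if p.2.val + 1 < m + 3 then p.2.val + 1 else 0 := by
    rw [h]; exact val_add_one p.2
  have hlt := p.2.isLt
  simp only [ec]
  split_ifs with h1 h2
  · rfl
  · -- q.val + 1 = p.val : impossible unless wrap nonsense
    exfalso
    split_ifs at hv <;> omega
  · -- wrap case: p.val = m+2, q.val = 0, gcol = 0
    split_ifs at hv
    · omega
    · simp only [gcol]
      omega

lemma cyc_adj_cases (i j : Fin (m + 3)) (h : (cycleGraph (m + 3)).Adj i j) :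
    j = i + 1 ∨ i = j + 1 := by
  have h2 := (SimpleGraph.cycleGraph_adj (n := m + 1)).mp h
  rcases h2 with h2 | h2
  · right; rw [sub_eq_iff_eq_add] at h2; exact h2.trans (add_comm 1 j)
  · left; rw [sub_eq_iff_eq_add] at h2; exact h2.trans (add_comm 1 i)

/-- colors window at a rim vertex: every cycle-edge color near vertex `a`
is `fcol a - 1` or `fcol a`. -/
lemma rim_window (a : ℕ) (ha : a < m + 3) :
    fcol (m + 3) a - 1 ≤ gcol (m + 3) a ∧ gcol (m + 3) a ≤ fcol (m + 3) a ∧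
    fcol (m + 3) a - 1 ≤ gcol (m + 3) (if a = 0 then m + 2 else a - 1) ∧
    gcol (m + 3) (if a = 0 then m + 2 else a - 1) ≤ fcol (m + 3) a := by
  simp only [fcol, gcol]
  split_ifs <;> omega

lemma rim_not_all_eq (a : ℕ) (ha : a < m + 3) :
    ¬(fcol (m + 3) a = gcol (m + 3) a ∧
      fcol (m + 3) a = gcol (m + 3) (if a = 0 then m + 2 else a - 1)) := by
  simp only [fcol, gcol]
  split_ifs <;> omega

end Stmt9Aux

/-- For every `k ≥ 3`, the corona product `K_1 ⊙ C_k` (the wheel on `k+1`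
vertices) satisfies `μ_int(K_1 ⊙ C_k) ≤ 2`. -/
theorem stmt9 (k : ℕ) (hk : 3 ≤ k) :
    impropriety (corona (⊥ : SimpleGraph (Fin 1)) (SimpleGraph.cycleGraph k)) ≤ 2 := by
  obtain ⟨m, rfl⟩ : ∃ m, k = m + 3 := ⟨k - 3, by omega⟩
  clear hk
  apply Nat.sInf_le
  set V : Type := Fin 1 ⊕ Fin 1 × Fin (m + 3) with hV
  set G : SimpleGraph V := corona (⊥ : SimpleGraph (Fin 1)) (SimpleGraph.cycleGraph (m + 3))
    with hG
  -- basic adjacency facts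
  have adj_inl_inr : ∀ (u : Fin 1) (p : Fin 1 × Fin (m + 3)),
      G.Adj (Sum.inl u) (Sum.inr p) := fun u p => (Subsingleton.elim u p.1 : u = p.1)
  have not_adj_inl_inl : ∀ (u w : Fin 1), ¬ G.Adj (Sum.inl u) (Sum.inl w) := by
    intro u w h
    have hb : (⊥ : SimpleGraph (Fin 1)).Adj u w := h
    simp at hb
  have adj_classify : ∀ (p : Fin 1 × Fin (m + 3)) (u : V), G.Adj (Sum.inr p) u →
      u = Sum.inl 0 ∨ ∃ j : Fin (m + 3), u = Sum.inr (0, j) ∧ (j = p.2 + 1 ∨ p.2 = j + 1) := by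
    rintro p (w | q) h
    · left; exact congrArg Sum.inl (Subsingleton.elim w 0)
    · right
      have h' : p.1 = q.1 ∧ (SimpleGraph.cycleGraph (m + 3)).Adj p.2 q.2 := h
      exact ⟨q.2, congrArg Sum.inr (Prod.ext (Subsingleton.elim _ _) rfl),
        Stmt9Aux.cyc_adj_cases _ _ h'.2⟩
  -- achieved colors at a rim vertex
  have achieved : ∀ (p : Fin 1 × Fin (m + 3)) (u : V), G.Adj (Sum.inr p) u →
      Stmt9Aux.col (m + 3) s(Sum.inr p, u) = Stmt9Aux.fcol (m + 3) p.2.val ∨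
      Stmt9Aux.col (m + 3) s(Sum.inr p, u) = Stmt9Aux.gcol (m + 3) p.2.val ∨
      Stmt9Aux.col (m + 3) s(Sum.inr p, u) =
        Stmt9Aux.gcol (m + 3) (if p.2.val = 0 then m + 2 else p.2.val - 1) := by
    intro p u h
    rcases adj_classify p u h with rfl | ⟨j, rfl, hj | hj⟩
    · left; rfl
    · right; left
      exact Stmt9Aux.ec_succ p (0, j) hj
    · right; right
      have hj' : j = p.2 - 1 := eq_sub_of_add_eq hj.symm
      have : Stmt9Aux.col (m + 3) s(Sum.inr p, Sum.inr ((0 : Fin 1), j)) =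
          Stmt9Aux.gcol (m + 3) j.val := by
        rw [Stmt9Aux.col_mk, Stmt9Aux.ec_symm]
        exact Stmt9Aux.ec_succ (0, j) p hj
      rw [this, hj', Stmt9Aux.val_sub_one]
  have pairbound : ∀ (s : Set V) (x y : V), s ⊆ {x, y} → s.ncard ≤ 2 := by
    intro s x y hs
    calc s.ncard ≤ ({x, y} : Set V).ncard := Set.ncard_le_ncard hs (Set.toFinite _)
    _ ≤ 2 := le_trans (Set.ncard_insert_le _ _) (by simp)
  refine ⟨Stmt9Aux.col (m + 3), ?_, ?_⟩
  -- interval condition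
  · rintro (v | p) a b x ⟨u1, h1, hc1⟩ ⟨u2, h2, hc2⟩ hax hxb
    · -- center vertex
      have get : ∀ (u : V) (c' : ℤ), G.Adj (Sum.inl v) u →
          Stmt9Aux.col (m + 3) s(Sum.inl v, u) = c' →
          ∃ n : ℕ, n < m + 3 ∧ Stmt9Aux.fcol (m + 3) n = c' := by
        rintro (w | p) c' h hc
        · exact absurd h (not_adj_inl_inl v w)
        · exact ⟨p.2.val, p.2.isLt, hc⟩
      obtain ⟨n1, hn1, hf1⟩ := get u1 a h1 hc1
      obtain ⟨n2, hn2, hf2⟩ := get u2 b h2 hc2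
      simp only [Stmt9Aux.fcol] at hf1 hf2
      have hx1 : 1 ≤ x := by omega
      have hxk : x ≤ m + 3 := by omega
      refine ⟨Sum.inr (0, ⟨x.toNat - 1, by omega⟩), adj_inl_inr v _, ?_⟩
      show Stmt9Aux.fcol (m + 3) (x.toNat - 1) = x
      simp only [Stmt9Aux.fcol]
      omega
    · -- rim vertex
      have w1 := achieved p u1 h1
      have w2 := achieved p u2 h2
      rw [hc1] at w1
      rw [hc2] at w2
      obtain ⟨hw1, hw2, hw3, hw4⟩ := Stmt9Aux.rim_window p.2.val p.2.isLt
      have : x = a ∨ x = b := by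
        rcases w1 with h | h | h <;> rcases w2 with h' | h' | h' <;> omega
      rcases this with rfl | rfl
      · exact ⟨u1, h1, hc1⟩
      · exact ⟨u2, h2, hc2⟩
  -- 2-improper
  · rintro (v | p) q
    · -- center vertex
      by_cases hq : 1 ≤ q ∧ q ≤ m + 3
      · refine pairbound _ (Sum.inr (0, ⟨(q - 1).toNat, by omega⟩))
          (Sum.inr (0, ⟨((m + 3 : ℤ) - q).toNat, by omega⟩)) ?_
        rintro (w | p) ⟨h, hc⟩
        · exact absurd h (not_adj_inl_inl v w)
        · have hfc : Stmt9Aux.fcol (m + 3) p.2.val = q := hc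
          simp only [Stmt9Aux.fcol] at hfc
          have hlt := p.2.isLt
          have hp : p.2.val = (q - 1).toNat ∨ p.2.val = ((m + 3 : ℤ) - q).toNat := by omega
          rcases hp with hp | hp
          · left
            exact congrArg Sum.inr (Prod.ext (Subsingleton.elim _ _) (Fin.ext hp))
          · right
            exact congrArg Sum.inr (Prod.ext (Subsingleton.elim _ _) (Fin.ext hp))
      · have hempty : {u : V | G.Adj (Sum.inl v) u ∧ Stmt9Aux.col (m + 3) s(Sum.inl v, u) = q}
            = ∅ := by
          apply Set.eq_empty_iff_forall_notMem.mpr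
          rintro (w | p) ⟨h, hc⟩
          · exact not_adj_inl_inl v w h
          · have hfc : Stmt9Aux.fcol (m + 3) p.2.val = q := hc
            simp only [Stmt9Aux.fcol] at hfc
            have hlt := p.2.isLt
            omega
        rw [hempty]
        simp
    · -- rim vertex
      have cS : Stmt9Aux.col (m + 3) s(Sum.inr p, Sum.inl (0 : Fin 1)) =
          Stmt9Aux.fcol (m + 3) p.2.val := rfl
      have cP : Stmt9Aux.col (m + 3) s(Sum.inr p, Sum.inr ((0 : Fin 1), p.2 + 1)) =
          Stmt9Aux.gcol (m + 3) p.2.val := Stmt9Aux.ec_succ p (0, p.2 + 1) rfl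
      have cM : Stmt9Aux.col (m + 3) s(Sum.inr p, Sum.inr ((0 : Fin 1), p.2 - 1)) =
          Stmt9Aux.gcol (m + 3) (if p.2.val = 0 then m + 2 else p.2.val - 1) := by
        rw [Stmt9Aux.col_mk, Stmt9Aux.ec_symm]
        rw [Stmt9Aux.ec_succ ((0 : Fin 1), p.2 - 1) p (sub_add_cancel p.2 1).symm]
        rw [Stmt9Aux.val_sub_one]
      have hmem : ∀ u : V, G.Adj (Sum.inr p) u →
          u = Sum.inl 0 ∨ u = Sum.inr ((0 : Fin 1), p.2 + 1) ∨
          u = Sum.inr ((0 : Fin 1), p.2 - 1) := by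
        intro u h
        rcases adj_classify p u h with rfl | ⟨j, rfl, hj | hj⟩
        · left; rfl
        · right; left; rw [hj]
        · right; right; rw [eq_sub_of_add_eq hj.symm]
      have hnall := Stmt9Aux.rim_not_all_eq (m := m) p.2.val p.2.isLt
      by_cases e1 : q = Stmt9Aux.fcol (m + 3) p.2.val
      · by_cases e2 : q = Stmt9Aux.gcol (m + 3) p.2.val
        · have e3 : q ≠ Stmt9Aux.gcol (m + 3) (if p.2.val = 0 then m + 2 else p.2.val - 1) := by
            intro e3
            exact hnall ⟨e1.symm.trans e2, e1.symm.trans e3⟩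
          refine pairbound _ (Sum.inl (0 : Fin 1)) (Sum.inr ((0 : Fin 1), p.2 + 1)) ?_
          rintro u ⟨h, hc⟩
          rcases hmem u h with rfl | rfl | rfl
          · left; rfl
          · right; rfl
          · exact absurd (hc.symm.trans cM) e3
        · refine pairbound _ (Sum.inl (0 : Fin 1)) (Sum.inr ((0 : Fin 1), p.2 - 1)) ?_
          rintro u ⟨h, hc⟩
          rcases hmem u h with rfl | rfl | rfl
          · left; rfl
          · exact absurd (hc.symm.trans cP) e2
          · right; rfl
      · refine pairbound _ (Sum.inr ((0 : Fin 1), p.2 + 1)) (Sum.inr ((0 : Fin 1), p.2 - 1)) ?_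
        rintro u ⟨h, hc⟩
        rcases hmem u h with rfl | rfl | rfl
        · exact absurd (hc.symm.trans cS) e1
        · left; rfl
        · right; rfl
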